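/- Let u_θ > 0, ω = 2u_θ, and for β ∈ ℕ (β ≥ 1) let S̄_β(x) = S_β(x + (-1)^β/(2β)), where S_β(x) = 1 for x > 1/β, S_β(x) = 1/2 + (βx)/2 for -1/β ≤ x ≤ 1/β, and S_β(x) = 0 for x < -1/β. Let u_β : [0,T] → ℝ be differentiable with u_β(0) = u_θ and u_β'(t) = -u_β(t) + ω S̄_β(u_β(t) - u_θ) for all t ∈ [0,T]. Then u_β'(0) = u_θ/2 > 0 if β is even and u_β'(0) = -u_θ/2 < 0 if β is odd; in particular there is a constant c = u_θ/2 > 0, independent of β, such that u_β'(0) > c for all even β and u_β'(0) < -c for all odd β. -/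
import Mathlib


open Set Finset Filter MeasureTheory

/-- The piecewise linear firing rate function with slope `β/2` (see (20) in the paper). -/
noncomputable def Spl (β : ℕ) (x : ℝ) : ℝ :=
  if 1 / (β : ℝ) < x then 1
  else if x < -(1 / (β : ℝ)) then 0
  else 1/2 + (β : ℝ) * x / 2

/-- The shifted firing rate functions `S̄_β(x) = S_β(x + (-1)^β/(2β))`. -/
noncomputable def SplBar (β : ℕ) (x : ℝ) : ℝ :=
  Spl β (x + (-1 : ℝ) ^ β / (2 * (β : ℝ)))

lemma SplBar_zero_even (β : ℕ) (hβ : 1 ≤ β) (he : Even β) : SplBar β 0 = 3/4 := by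
  have hb : (0:ℝ) < (β:ℝ) := by exact_mod_cast hβ
  have h1 : ((-1:ℝ))^β = 1 := he.neg_one_pow
  simp only [SplBar, Spl, h1, zero_add]
  have h2 : (0:ℝ) < 1 / (2*β) := by positivity
  have h3 : 1/(2*(β:ℝ)) ≤ 1/β := by
    rw [div_le_div_iff₀ (by positivity) hb]; nlinarith
  have h4 : (0:ℝ) < 1/(β:ℝ) := by positivity
  rw [if_neg (by rw [not_lt]; linarith), if_neg (by rw [not_lt]; linarith)]
  field_simp; ring

lemma SplBar_zero_odd (β : ℕ) (hβ : 1 ≤ β) (ho : Odd β) : SplBar β 0 = 1/4 := by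
  have hb : (0:ℝ) < (β:ℝ) := by exact_mod_cast hβ
  have h1 : ((-1:ℝ))^β = -1 := ho.neg_one_pow
  simp only [SplBar, Spl, h1, zero_add]
  have h2 : (0:ℝ) < 1 / (2*β) := by positivity
  have h3 : 1/(2*(β:ℝ)) ≤ 1/β := by
    rw [div_le_div_iff₀ (by positivity) hb]; nlinarith
  have h4 : (0:ℝ) < 1/(β:ℝ) := by positivity
  rw [neg_div]
  rw [if_neg (by rw [not_lt]; linarith), if_neg (by rw [not_lt]; linarith)]
  field_simp; ring

theorem stmt_17
    (uθ ω T : ℝ) (huθ : 0 < uθ) (hω : ω = 2 * uθ) (hT : 0 < T)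
    (u u' : ℕ → ℝ → ℝ)
    (hderiv : ∀ β : ℕ, 1 ≤ β → ∀ t ∈ Set.Icc (0:ℝ) T,
      HasDerivWithinAt (u β) (u' β t) (Set.Icc 0 T) t)
    (hinit : ∀ β : ℕ, 1 ≤ β → u β 0 = uθ)
    (hODE : ∀ β : ℕ, 1 ≤ β → ∀ t ∈ Set.Icc (0:ℝ) T,
      u' β t = -u β t + ω * SplBar β (u β t - uθ)) :
    (∀ β : ℕ, 1 ≤ β → Even β → u' β 0 = uθ / 2) ∧
    (∀ β : ℕ, 1 ≤ β → Odd β → u' β 0 = -(uθ / 2)) ∧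
    0 < uθ / 2 ∧
    (∃ c > (0:ℝ), ∀ β : ℕ, 1 ≤ β →
      (Even β → u' β 0 ≥ c) ∧ (Odd β → u' β 0 ≤ -c)) := by
  have h0 : (0:ℝ) ∈ Set.Icc (0:ℝ) T := ⟨le_refl 0, le_of_lt hT⟩
  have key : ∀ β : ℕ, 1 ≤ β → u' β 0 = -uθ + ω * SplBar β 0 := by
    intro β hβ
    have := hODE β hβ 0 h0
    rw [hinit β hβ, sub_self] at this
    exact this
  have heven : ∀ β : ℕ, 1 ≤ β → Even β → u' β 0 = uθ / 2 := by
    intro β hβ he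
    rw [key β hβ, SplBar_zero_even β hβ he, hω]; ring
  have hodd : ∀ β : ℕ, 1 ≤ β → Odd β → u' β 0 = -(uθ / 2) := by
    intro β hβ ho
    rw [key β hβ, SplBar_zero_odd β hβ ho, hω]; ring
  refine ⟨heven, hodd, by linarith, uθ / 2, by linarith, fun β hβ => ⟨?_, ?_⟩⟩
  · intro he; rw [heven β hβ he]
  · intro ho; rw [hodd β hβ ho]
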